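/- For every positive integer $k$, $\sum_{n=1}^{\infty} \frac{H_n^2 - \zeta_n(2)}{n(n+k)} = \frac{1}{k}\left\{ 2\zeta(3) + \frac{H_k^3 + 3 H_k \zeta_k(2) + 2\zeta_k(3)}{3} - \frac{H_k^2 + \zeta_k(2)}{k} \right\}$. -/

import Mathlib

noncomputable def H (n : ℕ) : ℝ := ∑ j ∈ Finset.Icc 1 n, (1 : ℝ) / j

noncomputable def zh (m n : ℕ) : ℝ := ∑ j ∈ Finset.Icc 1 n, (1 : ℝ) / (j : ℝ) ^ m

noncomputable def Z (s : ℕ) : ℝ := ∑' n : ℕ, 1 / ((n : ℝ) + 1) ^ s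

open Filter Finset Topology

lemma H_zero : H 0 = 0 := by simp [H]

lemma H_succ (n : ℕ) : H (n + 1) = H n + 1 / ((n : ℝ) + 1) := by
  rw [H, Finset.sum_Icc_succ_top (by omega : 1 ≤ n + 1)]
  push_cast [H]; ring

lemma zh_zero (m : ℕ) : zh m 0 = 0 := by simp [zh]

lemma zh_succ (m n : ℕ) : zh m (n + 1) = zh m n + 1 / ((n : ℝ) + 1) ^ m := by
  rw [zh, Finset.sum_Icc_succ_top (by omega : 1 ≤ n + 1)]
  push_cast [zh]; ring

lemma H_nonneg (n : ℕ) : 0 ≤ H n := by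
  apply Finset.sum_nonneg; intro j _; positivity

lemma H_eq_range (n : ℕ) : H n = ∑ j ∈ Finset.range n, 1 / ((j : ℝ) + 1) := by
  induction n with
  | zero => simp [H_zero]
  | succ n ih => rw [H_succ, ih, Finset.sum_range_succ]

lemma H_sub (n i : ℕ) : H (n + i) - H n = ∑ t ∈ Finset.range i, 1 / ((n : ℝ) + t + 1) := by
  induction i with
  | zero => simp
  | succ i ih =>
    rw [Finset.sum_range_succ, ← ih, show n + (i+1) = (n+i)+1 by ring, H_succ]
    push_cast; ring

lemma zh_le_H_sq (n : ℕ) : zh 2 n ≤ H n ^ 2 := by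
  induction n with
  | zero => simp [H_zero, zh_zero]
  | succ n ih =>
    rw [H_succ, zh_succ]
    have h1 : 0 ≤ H n := H_nonneg n
    have h2 : (0:ℝ) < (n:ℝ) + 1 := by positivity
    have h3 : (0:ℝ) ≤ 1 / ((n:ℝ)+1) := by positivity
    have h4 : (1/((n:ℝ)+1))^2 = 1/((n:ℝ)+1)^2 := by
      rw [div_pow]; norm_num
    nlinarith [mul_nonneg h1 h3, h4]

lemma H_le (n : ℕ) : H n ≤ 4 * (n : ℝ) ^ ((4:ℝ)⁻¹) := by
  induction n with
  | zero => simp [H_zero]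
  | succ n ih =>
    rw [H_succ]
    set b : ℝ := (n : ℝ) ^ ((4:ℝ)⁻¹) with hb
    set a : ℝ := ((n : ℝ) + 1) ^ ((4:ℝ)⁻¹) with ha
    have hnn : (0:ℝ) ≤ (n:ℝ) := by positivity
    have hb0 : 0 ≤ b := Real.rpow_nonneg hnn _
    have ha1 : 1 ≤ a := Real.one_le_rpow (by linarith) (by norm_num)
    have hba : b ≤ a := Real.rpow_le_rpow hnn (by linarith) (by norm_num)
    have hb4 : b ^ (4:ℕ) = (n:ℝ) := by
      rw [hb, ← Real.rpow_natCast (_ ^ _) 4, ← Real.rpow_mul hnn]; norm_num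
    have ha4 : a ^ (4:ℕ) = (n:ℝ) + 1 := by
      rw [ha, ← Real.rpow_natCast (_ ^ _) 4, ← Real.rpow_mul (by linarith)]; norm_num
    have key : 1 / ((n:ℝ) + 1) ≤ 4 * (a - b) := by
      rw [div_le_iff₀ (by linarith)]
      have expand : (a - b) * (a^3 + a^2*b + a*b^2 + b^3) = 1 := by
        have h4 : a^(4:ℕ) - b^(4:ℕ) = 1 := by rw [ha4, hb4]; ring
        nlinarith [h4]
      have hab : 0 ≤ a - b := sub_nonneg.2 hba
      have ha0 : (0:ℝ) ≤ a := by linarith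
      have hsum4 : a^3 + a^2*b + a*b^2 + b^3 ≤ 4*a^3 := by nlinarith [mul_nonneg ha0 hb0, mul_nonneg hb0 hb0, mul_nonneg (mul_nonneg ha0 ha0) (sub_nonneg.2 hba)]
      have h34 : a^3 ≤ a^4 := by nlinarith [pow_nonneg ha0 3]
      have key2 : 1 ≤ 4*(a-b)*a^4 := by nlinarith [mul_le_mul_of_nonneg_left hsum4 hab, mul_le_mul_of_nonneg_left h34 hab]
      calc (1:ℝ) ≤ 4*(a-b)*a^4 := key2
      _ = 4*(a-b)*((n:ℝ)+1) := by rw [← ha4]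
    push_cast
    calc H n + 1 / ((n:ℝ)+1) ≤ 4 * b + 4 * (a - b) := by linarith [ih]
    _ = 4 * a := by ring
lemma H_le' (n : ℕ) : H n ≤ 4 * ((n : ℝ) + 1) ^ ((4:ℝ)⁻¹) := by
  refine (H_le n).trans ?_
  have := Real.rpow_le_rpow (by positivity : (0:ℝ) ≤ (n:ℝ)) (by linarith : (n:ℝ) ≤ (n:ℝ)+1) (by norm_num : (0:ℝ) ≤ (4:ℝ)⁻¹)
  linarith

lemma tendsto_aux (q : ℝ) (hq : 0 < q) :
    Tendsto (fun N : ℕ => ((N:ℝ) + 1) ^ (-q)) atTop (𝓝 0) := by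
  have h1 : Tendsto (fun N : ℕ => (N:ℝ) + 1) atTop atTop :=
    tendsto_atTop_add_const_right _ _ tendsto_natCast_atTop_atTop
  exact (tendsto_rpow_neg_atTop hq).comp h1

lemma summable_aux (c : ℝ) : Summable (fun n : ℕ => c * ((n:ℝ) + 1) ^ (-(3/2) : ℝ)) := by
  apply Summable.mul_left
  have h := (Real.summable_nat_rpow (p := -(3/2))).2 (by norm_num)
  exact ((summable_nat_add_iff 1).2 h).congr (fun n => by push_cast; ring_nf)

lemma H_div_le (n : ℕ) (D : ℝ) (hD : ((n:ℝ)+1)^2 ≤ D) :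
    H n / D ≤ 4 * ((n:ℝ)+1) ^ (-(3/2) : ℝ) := by
  have hx : (1:ℝ) ≤ (n:ℝ)+1 := by norm_num
  have hx0 : (0:ℝ) < (n:ℝ)+1 := by positivity
  calc H n / D ≤ (4*((n:ℝ)+1)^((4:ℝ)⁻¹)) / (((n:ℝ)+1)^2) :=
        div_le_div₀ (by positivity) (H_le' n) (by positivity) hD
  _ = 4 * ((n:ℝ)+1) ^ ((4:ℝ)⁻¹ - 2) := by
        rw [Real.rpow_sub hx0, mul_div_assoc]
        norm_num [Real.rpow_two]
  _ ≤ 4 * ((n:ℝ)+1) ^ (-(3/2) : ℝ) := by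
        have := Real.rpow_le_rpow_of_exponent_le hx (by norm_num : (4:ℝ)⁻¹ - 2 ≤ -(3/2))
        linarith
lemma abel_tsum (A C : ℕ → ℝ) (hA0 : A 0 = 0)
    (hnn : ∀ n, 0 ≤ A (n+1) * (C n - C (n+1)))
    (hbd : Tendsto (fun N => A N * C N) atTop (𝓝 0))
    (hsum : Summable fun n => (A (n+1) - A n) * C n) :
    HasSum (fun n => A (n+1) * (C n - C (n+1))) (∑' n, (A (n+1) - A n) * C n) := by
  rw [hasSum_iff_tendsto_nat_of_nonneg hnn]
  have key : ∀ N, ∑ n ∈ Finset.range N, A (n+1) * (C n - C (n+1))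
      = (∑ n ∈ Finset.range N, (A (n+1) - A n) * C n) - A N * C N := by
    intro N
    induction N with
    | zero => simp [hA0]
    | succ N ih => rw [Finset.sum_range_succ, Finset.sum_range_succ, ih]; ring
  have hg := hsum.hasSum.tendsto_sum_nat
  simp only [key]
  simpa using hg.sub hbd

lemma hasSum_T (i : ℕ) (hi : 0 < i) :
    HasSum (fun n : ℕ => 1 / (((n:ℝ)+1) * ((n:ℝ)+1+i))) (H i / i) := by
  have hnn : ∀ n : ℕ, (0:ℝ) ≤ 1 / (((n:ℝ)+1) * ((n:ℝ)+1+i)) := fun n => by positivity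
  rw [hasSum_iff_tendsto_nat_of_nonneg hnn]
  have key : ∀ N, ∑ n ∈ Finset.range N, 1 / (((n:ℝ)+1) * ((n:ℝ)+1+i))
      = (1/(i:ℝ)) * ∑ t ∈ Finset.range i, (1/((t:ℝ)+1) - 1/((N:ℝ)+(t:ℝ)+1)) := by
    intro N
    induction N with
    | zero => simp
    | succ N ih =>
      rw [Finset.sum_range_succ, ih]
      push_cast
      have tel : ∑ t ∈ Finset.range i, (1/((N:ℝ)+(t:ℝ)+1) - 1/(((N:ℝ)+1)+(t:ℝ)+1)) =
          1/((N:ℝ)+1) - 1/((N:ℝ)+(i:ℝ)+1) := by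
        have h := Finset.sum_range_sub' (fun t : ℕ => 1/((N:ℝ)+(t:ℝ)+1)) i
        simp only [Nat.cast_zero, add_zero, Nat.cast_add, Nat.cast_one] at h
        rw [← h]
        apply Finset.sum_congr rfl
        intro t _
        push_cast
        ring_nf
      have expand : ∑ t ∈ Finset.range i, (1/((t:ℝ)+1) - 1/(((N:ℝ)+1)+(t:ℝ)+1)) =
          (∑ t ∈ Finset.range i, (1/((t:ℝ)+1) - 1/((N:ℝ)+(t:ℝ)+1)))
          + (1/((N:ℝ)+1) - 1/((N:ℝ)+(i:ℝ)+1)) := by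
        rw [← tel, ← Finset.sum_add_distrib]
        apply Finset.sum_congr rfl
        intro t _; ring
      rw [expand, mul_add]
      have hi0 : (0:ℝ) < i := by exact_mod_cast hi
      have h1 : ((N:ℝ)+1) > 0 := by positivity
      have h2 : ((N:ℝ)+1+(i:ℝ)) > 0 := by positivity
      field_simp
      ring
  simp only [key]
  clear key
  have hlim : Tendsto (fun N : ℕ => ∑ t ∈ Finset.range i, (1/((t:ℝ)+1) - 1/((N:ℝ)+(t:ℝ)+1)))
      atTop (𝓝 (∑ t ∈ Finset.range i, 1/((t:ℝ)+1))) := by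
    have : ∀ t ∈ Finset.range i, Tendsto (fun N : ℕ => 1/((t:ℝ)+1) - 1/((N:ℝ)+(t:ℝ)+1)) atTop
        (𝓝 (1/((t:ℝ)+1))) := by
      intro t _
      have h2 : Tendsto (fun N : ℕ => 1/((N:ℝ)+(t:ℝ)+1)) atTop (𝓝 0) := by
        have ha : Tendsto (fun N : ℕ => (N:ℝ)+(t:ℝ)+1) atTop atTop :=
          tendsto_atTop_add_const_right _ _
            (tendsto_atTop_add_const_right _ _ tendsto_natCast_atTop_atTop)
        simp only [one_div]; exact ha.inv_tendsto_atTop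
      simpa using (tendsto_const_nhds (x := 1/((t:ℝ)+1))).sub h2
    have := tendsto_finset_sum (Finset.range i) this
    simpa using this
  have heq : H i / i = 1/(i:ℝ) * ∑ t ∈ Finset.range i, 1/((t:ℝ)+1) := by
    rw [← H_eq_range]; ring
  rw [heq]
  exact hlim.const_mul (1/(i:ℝ))

lemma summable_W (i : ℕ) : Summable (fun n : ℕ => H n / (((n:ℝ)+1) * ((n:ℝ)+1+i))) := by
  apply Summable.of_nonneg_of_le (fun n => div_nonneg (H_nonneg n) (by positivity)) (fun n => ?_) (summable_aux 4)
  apply H_div_le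
  have h0 : (0:ℝ) ≤ (n:ℝ) := n.cast_nonneg
  have h1 : (0:ℝ) ≤ (i:ℝ) := i.cast_nonneg
  nlinarith
lemma rpow_neg_mono {x y q : ℝ} (hx : 0 < x) (hxy : x ≤ y) (hq : 0 ≤ q) :
    y ^ (-q) ≤ x ^ (-q) := by
  rw [Real.rpow_neg (by linarith), Real.rpow_neg hx.le]
  exact inv_anti₀ (Real.rpow_pos_of_pos hx q) (Real.rpow_le_rpow hx.le hxy hq)

noncomputable def Gfun : ℕ × ℕ → ℝ :=
  fun p => 1 / (((p.1:ℝ)+1) * ((p.1:ℝ)+(p.2:ℝ)+2)^2)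

noncomputable def Ffun : ℕ × ℕ → ℝ :=
  fun p => 1 / (((p.1:ℝ)+1) * ((p.2:ℝ)+1) * ((p.1:ℝ)+(p.2:ℝ)+2))

def eSig : (Σ s : ℕ, Fin (s+1)) ≃ ℕ × ℕ where
  toFun q := ((q.2 : ℕ), q.1 - (q.2 : ℕ))
  invFun p := ⟨p.1 + p.2, ⟨p.1, by omega⟩⟩
  left_inv := by
    rintro ⟨s, m⟩
    have hms : (m:ℕ) ≤ s := Nat.lt_succ_iff.mp m.isLt
    have h : (m:ℕ) + (s - (m:ℕ)) = s := by omega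
    dsimp only
    refine Sigma.ext h ?_
    refine (Fin.heq_ext_iff ?_).mpr rfl
    show (m:ℕ) + (s - (m:ℕ)) + 1 = s + 1
    omega
  right_inv := by
    rintro ⟨m, j⟩
    simp

lemma G_sigma (q : Σ s : ℕ, Fin (s+1)) :
    Gfun (eSig q) = (1/(((q.2:ℕ):ℝ)+1)) * (1/((q.1:ℝ)+2)^2) := by
  rcases q with ⟨s, m⟩
  have hms : (m:ℕ) ≤ s := Nat.lt_succ_iff.mp m.isLt
  show (1:ℝ) / ((((m:ℕ):ℝ)+1) * ((((m:ℕ)):ℝ) + (((s - (m:ℕ) : ℕ)):ℝ) + 2)^2) = _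
  rw [Nat.cast_sub hms]
  rw [show ((m:ℕ):ℝ) + ((s:ℝ) - ((m:ℕ):ℝ)) = s by ring]
  have h1 : (0:ℝ) < ((m:ℕ):ℝ) + 1 := by positivity
  have h2 : (0:ℝ) < (s:ℝ) + 2 := by positivity
  field_simp

lemma summable_Gsig : Summable (fun q : Σ s : ℕ, Fin (s+1) => Gfun (eSig q)) := by
  have hnn : ∀ q : Σ s : ℕ, Fin (s+1), 0 ≤ Gfun (eSig q) := by
    intro q; rw [G_sigma]; positivity
  rw [summable_sigma_of_nonneg hnn]
  constructor
  · intro s; exact Summable.of_finite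
  · apply Summable.of_nonneg_of_le (fun s => ?_) (fun s => ?_) (summable_aux 4)
    · exact tsum_nonneg (fun m => hnn ⟨s, m⟩)
    · have hv : ∑' m : Fin (s+1), Gfun (eSig ⟨s, m⟩) = H (s+1) * (1/((s:ℝ)+2)^2) := by
        rw [tsum_fintype]
        rw [Finset.sum_congr rfl (fun m _ => G_sigma ⟨s, m⟩)]
        rw [show ∑ m : Fin (s+1), (1/(((m:ℕ):ℝ)+1)) * (1/((s:ℝ)+2)^2)
            = (∑ m ∈ Finset.range (s+1), 1/((m:ℝ)+1)) * (1/((s:ℝ)+2)^2) by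
          rw [Fin.sum_univ_eq_sum_range (fun i => 1/((i:ℝ)+1) * (1/((s:ℝ)+2)^2)) (s+1),
            Finset.sum_mul]]
        rw [← H_eq_range]
      rw [hv]
      have h1 : H (s+1) * (1/((s:ℝ)+2)^2) = H (s+1) / (((s:ℝ)+2)^2) := by ring
      rw [h1]
      have h2 := H_div_le (s+1) (((s:ℝ)+2)^2) (by push_cast; nlinarith [Nat.cast_nonneg (α := ℝ) s])
      refine h2.trans ?_
      have h3 : ((s:ℝ)+1) ≤ (((s+1:ℕ)):ℝ) + 1 := by push_cast; linarith
      have := rpow_neg_mono (by positivity : (0:ℝ) < (s:ℝ)+1) h3 (by norm_num : (0:ℝ) ≤ (3/2:ℝ))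
      linarith

lemma summable_G : Summable Gfun := eSig.summable_iff.mp summable_Gsig

lemma tsum_G : ∑' p : ℕ × ℕ, Gfun p = ∑' s : ℕ, H (s+1) * (1/((s:ℝ)+2)^2) := by
  rw [← eSig.tsum_eq Gfun, summable_Gsig.tsum_sigma]
  congr 1
  funext s
  rw [tsum_fintype]
  rw [Finset.sum_congr rfl (fun m _ => G_sigma ⟨s, m⟩)]
  rw [show ∑ m : Fin (s+1), (1/(((m:ℕ):ℝ)+1)) * (1/((s:ℝ)+2)^2)
      = (∑ m ∈ Finset.range (s+1), 1/((m:ℝ)+1)) * (1/((s:ℝ)+2)^2) by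
    rw [Fin.sum_univ_eq_sum_range (fun i => 1/((i:ℝ)+1) * (1/((s:ℝ)+2)^2)) (s+1),
      Finset.sum_mul]]
  rw [← H_eq_range]
lemma summable_Hsq : Summable (fun n : ℕ => H n / ((n:ℝ)+1)^2) :=
  (summable_W 0).congr (fun n => by push_cast; ring_nf)

lemma summable_cube : Summable (fun n : ℕ => 1 / ((n:ℝ)+1)^3) := by
  have h := Real.summable_one_div_nat_pow.2 (show 1 < 3 by norm_num)
  exact ((summable_nat_add_iff 1).2 h).congr (fun n => by push_cast; ring_nf)

lemma Ffun_eq (p : ℕ × ℕ) : Ffun p = Gfun p + Gfun p.swap := by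
  rcases p with ⟨m, j⟩
  show (1:ℝ) / (((m:ℝ)+1) * ((j:ℝ)+1) * ((m:ℝ)+(j:ℝ)+2))
      = 1 / (((m:ℝ)+1) * ((m:ℝ)+(j:ℝ)+2)^2) + 1 / (((j:ℝ)+1) * ((j:ℝ)+(m:ℝ)+2)^2)
  have h1 : (0:ℝ) < (m:ℝ)+1 := by positivity
  have h2 : (0:ℝ) < (j:ℝ)+1 := by positivity
  have h3 : (0:ℝ) < (m:ℝ)+(j:ℝ)+2 := by positivity
  have h4 : (0:ℝ) < (j:ℝ)+(m:ℝ)+2 := by positivity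
  field_simp
  ring

lemma summable_Gswap : Summable (fun p : ℕ × ℕ => Gfun p.swap) :=
  (Equiv.prodComm ℕ ℕ).summable_iff.mpr summable_G

lemma summable_F : Summable Ffun :=
  (summable_G.add summable_Gswap).congr (fun p => (Ffun_eq p).symm)

lemma tsum_F2G : ∑' p : ℕ × ℕ, Ffun p = 2 * ∑' p : ℕ × ℕ, Gfun p := by
  have hswap : ∑' p : ℕ × ℕ, Gfun p.swap = ∑' p : ℕ × ℕ, Gfun p := by
    have := (Equiv.prodComm ℕ ℕ).tsum_eq Gfun
    rw [Equiv.coe_prodComm] at this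
    exact this
  calc ∑' p : ℕ × ℕ, Ffun p = ∑' p : ℕ × ℕ, (Gfun p + Gfun p.swap) := tsum_congr Ffun_eq
  _ = (∑' p : ℕ × ℕ, Gfun p) + ∑' p : ℕ × ℕ, Gfun p.swap := summable_G.tsum_add summable_Gswap
  _ = 2 * ∑' p : ℕ × ℕ, Gfun p := by rw [hswap]; ring

lemma tsum_F_rows : ∑' p : ℕ × ℕ, Ffun p
    = ∑' m : ℕ, (1/((m:ℝ)+1)) * (H (m+1) / ((m:ℝ)+1)) := by
  rw [summable_F.tsum_prod]
  refine tsum_congr fun m => ?_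
  have h := (hasSum_T (m+1) (Nat.succ_pos m)).mul_left (1/((m:ℝ)+1))
  rw [show (fun j : ℕ => 1/((m:ℝ)+1) * (1 / (((j:ℝ)+1) * ((j:ℝ)+1+((m+1:ℕ):ℝ)))))
      = (fun j : ℕ => Ffun (m, j)) from funext fun j => by
    show _ = (1:ℝ) / (((m:ℝ)+1) * ((j:ℝ)+1) * ((m:ℝ)+(j:ℝ)+2))
    have h1 : ((m:ℝ)+1) ≠ 0 := by positivity
    have h2 : ((j:ℝ)+1) ≠ 0 := by positivity
    have h3 : ((m:ℝ)+(j:ℝ)+2) ≠ 0 := by positivity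
    push_cast
    field_simp
    ring] at h
  rw [h.tsum_eq]
  push_cast; ring

lemma tsum_rows_split : ∑' m : ℕ, (1/((m:ℝ)+1)) * (H (m+1) / ((m:ℝ)+1))
    = (∑' m : ℕ, H m / ((m:ℝ)+1)^2) + Z 3 := by
  have hpt : ∀ m : ℕ, (1/((m:ℝ)+1)) * (H (m+1) / ((m:ℝ)+1))
      = H m / ((m:ℝ)+1)^2 + 1 / ((m:ℝ)+1)^3 := by
    intro m
    rw [H_succ]
    have : (0:ℝ) < (m:ℝ)+1 := by positivity
    field_simp
  rw [tsum_congr hpt, summable_Hsq.tsum_add summable_cube]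
  rfl

lemma tsum_G_eq_Hsq : ∑' p : ℕ × ℕ, Gfun p = ∑' m : ℕ, H m / ((m:ℝ)+1)^2 := by
  rw [tsum_G]
  conv_rhs => rw [summable_Hsq.tsum_eq_zero_add]
  rw [H_zero]
  simp only [zero_div, zero_add]
  exact tsum_congr fun s => by push_cast; ring

lemma W0 : ∑' n : ℕ, H n / ((n:ℝ)+1)^2 = Z 3 := by
  have h1 := tsum_F2G
  have h2 := tsum_F_rows
  have h3 := tsum_rows_split
  have h4 := tsum_G_eq_Hsq
  rw [h4] at h1
  rw [h2, h3] at h1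
  linarith
lemma one_div_le_aux (n : ℕ) (D : ℝ) (hD : ((n:ℝ)+1)^2 ≤ D) :
    1 / D ≤ ((n:ℝ)+1) ^ (-(3/2) : ℝ) := by
  have hx0 : (0:ℝ) < (n:ℝ)+1 := by positivity
  calc 1/D ≤ 1/((n:ℝ)+1)^2 := one_div_le_one_div_of_le (by positivity) hD
  _ = ((n:ℝ)+1) ^ (-(2:ℝ)) := by
      rw [one_div, ← Real.rpow_natCast ((n:ℝ)+1) 2, ← Real.rpow_neg hx0.le]
      norm_num
  _ ≤ ((n:ℝ)+1) ^ (-(3/2) : ℝ) :=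
      Real.rpow_le_rpow_of_exponent_le (by norm_num) (by norm_num)

lemma H_div_le_lin (n : ℕ) (D : ℝ) (hD : ((n:ℝ)+1) ≤ D) :
    H n / D ≤ 4 * ((n:ℝ)+1) ^ (-(3/4) : ℝ) := by
  have hx : (1:ℝ) ≤ (n:ℝ)+1 := by norm_num
  have hx0 : (0:ℝ) < (n:ℝ)+1 := by positivity
  calc H n / D ≤ (4*((n:ℝ)+1)^((4:ℝ)⁻¹)) / ((n:ℝ)+1) :=
        div_le_div₀ (by positivity) (H_le' n) (by positivity) hD
  _ = 4 * ((n:ℝ)+1) ^ ((4:ℝ)⁻¹ - 1) := by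
        rw [Real.rpow_sub hx0, mul_div_assoc]
        norm_num
  _ ≤ 4 * ((n:ℝ)+1) ^ (-(3/4) : ℝ) := by
        have := Real.rpow_le_rpow_of_exponent_le hx (by norm_num : (4:ℝ)⁻¹ - 1 ≤ -(3/4))
        linarith

lemma summable_V (j : ℕ) : Summable (fun n : ℕ => H n / (((n:ℝ)+1+j) * ((n:ℝ)+2+j))) := by
  apply Summable.of_nonneg_of_le (fun n => div_nonneg (H_nonneg n) (by positivity))
    (fun n => ?_) (summable_aux 4)
  apply H_div_le
  have h0 : (0:ℝ) ≤ (n:ℝ) := n.cast_nonneg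
  have h1 : (0:ℝ) ≤ (j:ℝ) := j.cast_nonneg
  nlinarith

noncomputable def Cfun (j : ℕ) : ℕ → ℝ := fun n => 1/((n:ℝ)+2+j)

lemma Vj (j : ℕ) :
    ∑' n : ℕ, H n / (((n:ℝ)+1+j) * ((n:ℝ)+2+j)) = H (j+1) / ((j:ℝ)+1) := by
  have hCd : ∀ n : ℕ, Cfun j n - Cfun j (n+1) = 1/(((n:ℝ)+2+j) * ((n:ℝ)+3+j)) := by
    intro n
    have h1 : ((n:ℝ)+2+(j:ℝ)) ≠ 0 := by positivity
    have h2 : ((n:ℝ)+3+(j:ℝ)) ≠ 0 := by positivity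
    show 1/((n:ℝ)+2+j) - 1/((((n+1:ℕ)):ℝ)+2+j) = _
    push_cast
    rw [show ((n:ℝ)+1+2+(j:ℝ)) = (n:ℝ)+3+(j:ℝ) by ring]
    rw [div_sub_div _ _ h1 h2]
    congr 1
    ring
  have hb1 : ∀ N : ℕ, H N * Cfun j N ≤ 4*((N:ℝ)+1)^(-(3/4):ℝ) := by
    intro N
    have h2 : (0:ℝ) ≤ (j:ℝ) := j.cast_nonneg
    have h3 : H N * Cfun j N = H N / ((N:ℝ)+2+j) := by
      show H N * (1/((N:ℝ)+2+j)) = _; ring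
    rw [h3]
    exact H_div_le_lin N _ (by linarith)
  have hb0 : ∀ N : ℕ, 0 ≤ H N * Cfun j N := fun N =>
    mul_nonneg (H_nonneg N) (by show (0:ℝ) ≤ 1/((N:ℝ)+2+j); positivity)
  have hbd : Tendsto (fun N => H N * Cfun j N) atTop (𝓝 0) :=
    squeeze_zero hb0 hb1 (by simpa using (tendsto_aux (3/4) (by norm_num)).const_mul 4)
  have hpt : ∀ n : ℕ, (H (n+1) - H n) * Cfun j n
      = 1 / (((n:ℝ)+1) * ((n:ℝ)+2+(j:ℝ))) := by
    intro n
    rw [H_succ]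
    show (H n + 1/((n:ℝ)+1) - H n) * (1/((n:ℝ)+2+j)) = _
    rw [show H n + 1/((n:ℝ)+1) - H n = 1/((n:ℝ)+1) by ring, div_mul_div_comm, one_mul]
  have hsum : Summable (fun n : ℕ => (H (n+1) - H n) * Cfun j n) := by
    apply Summable.of_nonneg_of_le (fun n => ?_) (fun n => ?_) (summable_aux 1)
    · rw [hpt n]; positivity
    · rw [hpt n, one_mul]
      apply one_div_le_aux
      have h0 : (0:ℝ) ≤ (n:ℝ) := n.cast_nonneg
      have h1 : (0:ℝ) ≤ (j:ℝ) := j.cast_nonneg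
      nlinarith
  have habel := abel_tsum H (Cfun j) H_zero
    (fun n => by rw [hCd n]; exact mul_nonneg (H_nonneg _) (by positivity))
    hbd hsum
  have hRHS : ∑' n : ℕ, (H (n+1) - H n) * Cfun j n = H (j+1) / ((j:ℝ)+1) := by
    rw [tsum_congr hpt]
    have hpt2 : ∀ n : ℕ, 1 / (((n:ℝ)+1) * ((n:ℝ)+2+(j:ℝ)))
        = 1 / (((n:ℝ)+1) * ((n:ℝ)+1+((j+1:ℕ):ℝ))) := by
      intro n; push_cast
      rw [show (n:ℝ)+1+((j:ℝ)+1) = (n:ℝ)+2+(j:ℝ) by ring]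
    rw [tsum_congr hpt2, (hasSum_T (j+1) (Nat.succ_pos j)).tsum_eq]
    push_cast
    ring
  rw [hRHS] at habel
  rw [(summable_V j).tsum_eq_zero_add, H_zero]
  simp only [zero_div, zero_add]
  rw [← habel.tsum_eq]
  refine tsum_congr fun n => ?_
  rw [hCd n, mul_one_div]
  push_cast
  rw [show (n:ℝ)+1+1+(j:ℝ) = (n:ℝ)+2+(j:ℝ) by ring,
    show (n:ℝ)+1+2+(j:ℝ) = (n:ℝ)+3+(j:ℝ) by ring]
lemma one_div_sub (x y : ℝ) (hx : x ≠ 0) (hy : y ≠ 0) :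
    1/x - 1/y = (y - x)/(x*y) := by
  rw [div_sub_div _ _ hx hy, one_mul, mul_one]

lemma sum_Ht (i : ℕ) : ∑ j ∈ Finset.range i, H (j+1)/((j:ℝ)+1) = (H i^2 + zh 2 i)/2 := by
  induction i with
  | zero => simp [H_zero, zh_zero]
  | succ i ih =>
    rw [Finset.sum_range_succ, ih, H_succ, zh_succ]
    have h : ((i:ℝ)+1) ≠ 0 := by positivity
    field_simp
    ring

lemma tel2 (n i : ℕ) : ∑ j ∈ Finset.range i, (1/((n:ℝ)+1+j) - 1/((n:ℝ)+2+j))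
    = 1/((n:ℝ)+1) - 1/((n:ℝ)+1+i) := by
  have tel := Finset.sum_range_sub' (fun j : ℕ => 1/((n:ℝ)+1+j)) i
  calc ∑ j ∈ Finset.range i, (1/((n:ℝ)+1+j) - 1/((n:ℝ)+2+j))
      = ∑ j ∈ Finset.range i, (1/((n:ℝ)+1+j) - 1/((n:ℝ)+1+((j+1:ℕ):ℝ))) := by
        refine Finset.sum_congr rfl fun j _ => ?_
        push_cast
        ring_nf
  _ = 1/((n:ℝ)+1+((0:ℕ):ℝ)) - 1/((n:ℝ)+1+(i:ℝ)) := tel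
  _ = 1/((n:ℝ)+1) - 1/((n:ℝ)+1+i) := by norm_num

lemma Wpos (i : ℕ) (hi : 0 < i) :
    ∑' n : ℕ, H n / (((n:ℝ)+1) * ((n:ℝ)+1+i)) = (H i^2 + zh 2 i)/(2*i) := by
  have hi' : ((i:ℝ)) ≠ 0 := Nat.cast_ne_zero.2 hi.ne'
  have key : ∀ n : ℕ, H n / (((n:ℝ)+1) * ((n:ℝ)+1+i))
      = ∑ j ∈ Finset.range i, (1/(i:ℝ)) * (H n / (((n:ℝ)+1+j) * ((n:ℝ)+2+j))) := by
    intro n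
    have h1 : ((n:ℝ)+1) ≠ 0 := by positivity
    have h2 : ((n:ℝ)+1+(i:ℝ)) ≠ 0 := by positivity
    calc H n / (((n:ℝ)+1) * ((n:ℝ)+1+i))
        = (1/(i:ℝ)) * H n * (1/((n:ℝ)+1) - 1/((n:ℝ)+1+i)) := by
          rw [one_div_sub _ _ h1 h2, show (n:ℝ)+1+(i:ℝ) - ((n:ℝ)+1) = (i:ℝ) by ring]
          field_simp
    _ = (1/(i:ℝ)) * H n * ∑ j ∈ Finset.range i, (1/((n:ℝ)+1+j) - 1/((n:ℝ)+2+j)) := by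
          rw [tel2]
    _ = ∑ j ∈ Finset.range i, (1/(i:ℝ)) * (H n / (((n:ℝ)+1+j) * ((n:ℝ)+2+j))) := by
          rw [Finset.mul_sum]
          refine Finset.sum_congr rfl fun j _ => ?_
          have hx : ((n:ℝ)+1+(j:ℝ)) ≠ 0 := by positivity
          have hy : ((n:ℝ)+2+(j:ℝ)) ≠ 0 := by positivity
          rw [one_div_sub _ _ hx hy, show (n:ℝ)+2+(j:ℝ) - ((n:ℝ)+1+(j:ℝ)) = 1 by ring]
          ring
  rw [tsum_congr key, Summable.tsum_finsetSum (fun j _ => ((summable_V j).mul_left _))]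
  have hsum2 : ∀ j ∈ Finset.range i,
      ∑' n : ℕ, (1/(i:ℝ)) * (H n / (((n:ℝ)+1+j) * ((n:ℝ)+2+j)))
      = (1/(i:ℝ)) * (H (j+1) / ((j:ℝ)+1)) := by
    intro j _
    rw [tsum_mul_left, Vj j]
  rw [Finset.sum_congr rfl hsum2, ← Finset.mul_sum, sum_Ht i,
    div_mul_div_comm, one_mul, mul_comm (i:ℝ) 2]

noncomputable def afun (n : ℕ) : ℝ := H n ^ 2 - zh 2 n

noncomputable def Dfun (k : ℕ) : ℕ → ℝ := fun n => (1/(k:ℝ)) * (H (n+k) - H n)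

lemma afun_nonneg (n : ℕ) : 0 ≤ afun n := sub_nonneg.2 (zh_le_H_sq n)

lemma afun_succ_sub (n : ℕ) : afun (n+1) - afun n = 2 * H n / ((n:ℝ)+1) := by
  unfold afun
  rw [H_succ, zh_succ]
  have h : ((n:ℝ)+1) ≠ 0 := by positivity
  field_simp
  ring

lemma Dfun_nonneg (k n : ℕ) : 0 ≤ Dfun k n := by
  unfold Dfun
  apply mul_nonneg (by positivity)
  rw [H_sub]
  apply Finset.sum_nonneg
  intro t _
  positivity

lemma Dfun_le (k n : ℕ) (hk : 0 < k) : Dfun k n ≤ 1/((n:ℝ)+1) := by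
  unfold Dfun
  rw [H_sub]
  have hb : ∀ t ∈ Finset.range k, 1/((n:ℝ)+(t:ℝ)+1) ≤ 1/((n:ℝ)+1) := by
    intro t _
    apply one_div_le_one_div_of_le (by positivity)
    have : (0:ℝ) ≤ (t:ℝ) := t.cast_nonneg
    linarith
  have hsum := Finset.sum_le_sum hb
  rw [Finset.sum_const, Finset.card_range] at hsum
  have hk' : ((k:ℝ)) ≠ 0 := Nat.cast_ne_zero.2 hk.ne'
  have hkpos : (0:ℝ) < (k:ℝ) := by positivity
  calc (1/(k:ℝ)) * ∑ t ∈ Finset.range k, 1/((n:ℝ)+(t:ℝ)+1)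
      ≤ (1/(k:ℝ)) * (k • (1/((n:ℝ)+1))) := by
        apply mul_le_mul_of_nonneg_left hsum (by positivity)
  _ = 1/((n:ℝ)+1) := by
        rw [nsmul_eq_mul]
        field_simp
lemma Dfun_diff (k n : ℕ) (hk : 0 < k) :
    Dfun k n - Dfun k (n+1) = 1/(((n:ℝ)+1) * ((n:ℝ)+1+k)) := by
  have hk' : ((k:ℝ)) ≠ 0 := Nat.cast_ne_zero.2 hk.ne'
  have h1 : ((n:ℝ)+1) ≠ 0 := by positivity
  have h2 : ((n:ℝ)+1+(k:ℝ)) ≠ 0 := by positivity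
  unfold Dfun
  rw [show n+1+k = (n+k)+1 by ring, H_succ (n+k), H_succ n]
  push_cast
  rw [← mul_sub]
  rw [show H (n+k) - H n - (H (n+k) + 1/((n:ℝ)+(k:ℝ)+1) - (H n + 1/((n:ℝ)+1)))
      = 1/((n:ℝ)+1) - 1/((n:ℝ)+(k:ℝ)+1) by ring]
  rw [one_div_sub _ _ h1 (by positivity : ((n:ℝ)+(k:ℝ)+1) ≠ 0),
    show (n:ℝ)+(k:ℝ)+1 - ((n:ℝ)+1) = (k:ℝ) by ring]
  rw [show ((n:ℝ)+1)*((n:ℝ)+1+(k:ℝ)) = ((n:ℝ)+1)*((n:ℝ)+(k:ℝ)+1) by ring]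
  field_simp
lemma H_one : H 1 = 1 := by
  rw [show (1:ℕ) = 0+1 from rfl, H_succ, H_zero]; norm_num

lemma zh_one (m : ℕ) : zh m 1 = 1 := by
  rw [show (1:ℕ) = 0+1 from rfl, zh_succ, zh_zero]; norm_num

lemma sum_phi (K : ℕ) : ∑ i ∈ Finset.range K, (H (i+1)^2 + zh 2 (i+1))/((i:ℝ)+1)
    = (H (K+1)^3 + 3*H (K+1)*zh 2 (K+1) + 2*zh 3 (K+1))/3
      - (H (K+1)^2 + zh 2 (K+1))/((K:ℝ)+1) := by
  induction K with
  | zero =>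
    rw [Finset.sum_range_zero, H_one, zh_one, zh_one]
    norm_num
  | succ K ih =>
    rw [Finset.sum_range_succ, ih]
    rw [H_succ (K+1), zh_succ 2 (K+1), zh_succ 3 (K+1)]
    push_cast
    have h1 : ((K:ℝ)+1) ≠ 0 := by positivity
    have h2 : ((K:ℝ)+1+1) ≠ 0 := by positivity
    field_simp
    ring
lemma zh_nonneg (m n : ℕ) : 0 ≤ zh m n := by
  apply Finset.sum_nonneg; intro j _; positivity

theorem stmt3 (k : ℕ) (hk : 0 < k) :
    ∑' n : ℕ, (H (n + 1) ^ 2 - zh 2 (n + 1)) / (((n : ℝ) + 1) * ((n : ℝ) + 1 + k)) =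
      (1 / (k : ℝ)) *
        (2 * Z 3 + (H k ^ 3 + 3 * H k * zh 2 k + 2 * zh 3 k) / 3 -
          (H k ^ 2 + zh 2 k) / k) := by
  have hk' : ((k:ℝ)) ≠ 0 := Nat.cast_ne_zero.2 hk.ne'
  have hkpos : (0:ℝ) < (k:ℝ) := by exact_mod_cast hk
  -- boundary term tends to zero
  have hbd : Tendsto (fun N => afun N * Dfun k N) atTop (𝓝 0) := by
    apply squeeze_zero (g := fun N : ℕ => 16 * ((N:ℝ)+1)^(-(1/2):ℝ))
      (fun N => mul_nonneg (afun_nonneg N) (Dfun_nonneg k N)) (fun N => ?_)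
      (by simpa using (tendsto_aux (1/2) (by norm_num)).const_mul 16)
    have h1 : afun N ≤ H N^2 := by
      unfold afun; linarith [zh_nonneg 2 N]
    have h2 : H N^2 ≤ 16*((N:ℝ)+1)^((2:ℝ)⁻¹) := by
      have h4 : H N^2 ≤ (4*((N:ℝ)+1)^((4:ℝ)⁻¹))^2 :=
        pow_le_pow_left₀ (H_nonneg N) (H_le' N) 2
      calc H N^2 ≤ (4*((N:ℝ)+1)^((4:ℝ)⁻¹))^2 := h4
      _ = 16*(((N:ℝ)+1)^((4:ℝ)⁻¹))^2 := by ring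
      _ = 16*((N:ℝ)+1)^((2:ℝ)⁻¹) := by
          rw [← Real.rpow_natCast (((N:ℝ)+1)^((4:ℝ)⁻¹)) 2, ← Real.rpow_mul (by positivity)]
          norm_num
    calc afun N * Dfun k N ≤ H N^2 * (1/((N:ℝ)+1)) :=
          mul_le_mul h1 (Dfun_le k N hk) (Dfun_nonneg k N) (sq_nonneg (H N))
    _ ≤ 16*((N:ℝ)+1)^((2:ℝ)⁻¹) * (1/((N:ℝ)+1)) :=
          mul_le_mul_of_nonneg_right h2 (by positivity)
    _ = 16 * ((N:ℝ)+1)^(-(1/2):ℝ) := by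
          rw [mul_one_div, mul_div_assoc]
          congr 1
          rw [div_eq_mul_inv, ← Real.rpow_neg_one ((N:ℝ)+1),
            ← Real.rpow_add (by positivity : (0:ℝ) < (N:ℝ)+1)]
          norm_num
  -- pointwise formula for the Abel transform terms
  have hg_pt : ∀ n : ℕ, (afun (n+1) - afun n) * Dfun k n
      = ∑ i ∈ Finset.range k, (2/(k:ℝ)) * (H n / (((n:ℝ)+1) * ((n:ℝ)+1+i))) := by
    intro n
    rw [afun_succ_sub]
    unfold Dfun
    rw [H_sub, Finset.mul_sum, Finset.mul_sum]
    refine Finset.sum_congr rfl fun t _ => ?_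
    have h1 : ((n:ℝ)+1) ≠ 0 := by positivity
    have h2 : ((n:ℝ)+(t:ℝ)+1) ≠ 0 := by positivity
    have h3 : ((n:ℝ)+1+(t:ℝ)) ≠ 0 := by positivity
    rw [div_mul_eq_div_div]
    ring
  have hgsum : Summable (fun n => (afun (n+1) - afun n) * Dfun k n) := by
    have hs : Summable (fun n => ∑ i ∈ Finset.range k,
        (2/(k:ℝ)) * (H n / (((n:ℝ)+1) * ((n:ℝ)+1+i)))) :=
      summable_sum (fun i _ => (summable_W i).mul_left _)
    exact hs.congr (fun n => (hg_pt n).symm)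
  have habel := abel_tsum afun (Dfun k)
    (by unfold afun; rw [H_zero, zh_zero]; ring)
    (fun n => by
      rw [Dfun_diff k n hk]
      exact mul_nonneg (afun_nonneg _) (by positivity))
    hbd hgsum
  have hL : ∀ n : ℕ, (H (n+1)^2 - zh 2 (n+1)) / (((n:ℝ)+1) * ((n:ℝ)+1+k))
      = afun (n+1) * (Dfun k n - Dfun k (n+1)) := by
    intro n
    rw [Dfun_diff k n hk]
    unfold afun
    rw [mul_one_div]
  rw [tsum_congr hL, habel.tsum_eq, tsum_congr hg_pt,
    Summable.tsum_finsetSum (fun i _ => (summable_W i).mul_left _)]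
  have hterm : ∀ i ∈ Finset.range k,
      ∑' n : ℕ, (2/(k:ℝ)) * (H n / (((n:ℝ)+1) * ((n:ℝ)+1+i)))
      = (2/(k:ℝ)) * ∑' n : ℕ, H n / (((n:ℝ)+1) * ((n:ℝ)+1+i)) :=
    fun i _ => tsum_mul_left
  rw [Finset.sum_congr rfl hterm]
  obtain ⟨K, rfl⟩ : ∃ K, k = K+1 := ⟨k-1, by omega⟩
  rw [Finset.sum_range_succ']
  -- the i = 0 term
  have h00 : ∑' n : ℕ, H n / (((n:ℝ)+1) * ((n:ℝ)+1+((0:ℕ):ℝ))) = Z 3 := by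
    rw [← W0]
    refine tsum_congr fun n => ?_
    push_cast
    ring_nf
  rw [h00]
  -- the i ≥ 1 terms
  have hpos : ∀ i ∈ Finset.range K,
      (2/((K+1:ℕ):ℝ)) * ∑' n : ℕ, H n / (((n:ℝ)+1) * ((n:ℝ)+1+((i+1:ℕ):ℝ)))
      = (1/((K:ℝ)+1)) * ((H (i+1)^2 + zh 2 (i+1))/((i:ℝ)+1)) := by
    intro i _
    rw [Wpos (i+1) (Nat.succ_pos i)]
    have h1 : ((i:ℝ)+1) ≠ 0 := by positivity
    have h2 : ((K:ℝ)+1) ≠ 0 := by positivity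
    push_cast
    field_simp
  rw [Finset.sum_congr rfl hpos, ← Finset.mul_sum, sum_phi K]
  push_cast
  field_simp
  ring
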